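/- Fix d ∈ ℚ, d ≠ 0, and a power series D₁ with zero constant term. If series D_i (i ≥ 0) satisfy D₀ = 1/d, D_i(0) = 0 for i ≥ 1, D_1 is given, and the recursion ∑_{k=0}^{i} (-1)^k (D_{i-k})' D_k = 0 holds for all i ≥ 2, then D_i = (d^{i-1}/i!) D₁^i for all i ≥ 1. -/

import Mathlib

open PowerSeries

lemma aux_derivativeFun_pow (f : PowerSeries ℚ) (n : ℕ) :
    (f ^ (n + 1)).derivativeFun = ((n : ℚ) + 1) • (f ^ n * f.derivativeFun) := by
  induction n with
  | zero => simp
  | succ n ih =>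
    rw [pow_succ, derivativeFun_mul, ih, smul_eq_mul, smul_eq_mul, smul_eq_C_mul,
      smul_eq_C_mul]
    push_cast
    simp only [map_add, map_one]
    ring

lemma aux_alt_sum (m : ℕ) :
    ∑ k ∈ Finset.range (m + 1),
      (-1 : ℚ) ^ (k + 1) / ((m - k).factorial * (k + 1).factorial) =
      -1 / ((m + 1).factorial : ℚ) := by
  have h1 : ∀ k ∈ Finset.range (m + 1),
      (-1 : ℚ) ^ (k + 1) / ((m - k).factorial * (k + 1).factorial) =
      ((-1 : ℚ) ^ (k + 1) * ((m + 1).choose (k + 1) : ℚ)) / ((m + 1).factorial : ℚ) := by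
    intro k hk
    rw [Finset.mem_range] at hk
    have hle : k + 1 ≤ m + 1 := by omega
    have := Nat.choose_mul_factorial_mul_factorial hle
    have hsub : m + 1 - (k + 1) = m - k := by omega
    rw [hsub] at this
    have hQ : ((m + 1).choose (k + 1) : ℚ) * (k + 1).factorial * (m - k).factorial =
        ((m + 1).factorial : ℚ) := by exact_mod_cast congrArg (Nat.cast : ℕ → ℚ) this
    field_simp
    linear_combination (-1 : ℚ) * hQ
  rw [Finset.sum_congr rfl h1, ← Finset.sum_div]
  congr 1
  have key : ∑ j ∈ Finset.range (m + 2), (-1 : ℚ) ^ j * ((m + 1).choose j : ℚ) = 0 := by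
    have := Int.alternating_sum_range_choose_of_ne (n := m + 1) (by omega)
    exact_mod_cast congrArg (Int.cast : ℤ → ℚ) this
  rw [Finset.sum_range_succ'] at key
  simp only [pow_zero, one_mul, Nat.choose_zero_right, Nat.cast_one] at key
  linarith [key]

/-- Theorem 1: the localization recursion uniquely determines the `D_i`.  If
`D₀ = 1/d`, the `D_i` (`i ≥ 1`) have zero constant term, and
`∑_{k=0}^{i} (-1)^k (D_{i-k})' D_k = 0` for all `i ≥ 2`, then
`D_i = (d^(i-1)/i!) D₁^i` for all `i ≥ 1`. -/
theorem D_series_unique (d : ℚ) (hd : d ≠ 0)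
    (D : ℕ → PowerSeries ℚ)
    (hD0 : D 0 = PowerSeries.C (1 / d))
    (hconst : ∀ i, 1 ≤ i → PowerSeries.constantCoeff (D i) = 0)
    (hrec : ∀ i, 2 ≤ i →
      ∑ k ∈ Finset.range (i + 1),
        ((-1 : ℚ) ^ k) • ((D (i - k)).derivativeFun * D k) = 0)
    (i : ℕ) (hi : 1 ≤ i) :
    D i = (d ^ (i - 1) / (Nat.factorial i : ℚ)) • (D 1) ^ i := by
  revert hi
  induction i using Nat.strong_induction_on with
  | _ i IH =>
  intro hi
  rcases Nat.lt_or_ge i 2 with h2 | h2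
  · interval_cases i
    simp
  · obtain ⟨m, rfl⟩ : ∃ m, i = m + 2 := ⟨i - 2, by omega⟩
    have hsum := hrec (m + 2) (by omega)
    set f1 := D 1 with hf1
    set G := f1 ^ (m + 1) * f1.derivativeFun with hG
    have hmid : ∀ k ∈ Finset.range (m + 1),
        (-1 : ℚ) ^ (k + 1) • ((D (m + 2 - (k + 1))).derivativeFun * D (k + 1)) =
        ((-1 : ℚ) ^ (k + 1) * d ^ m / ((m - k).factorial * (k + 1).factorial)) • G := by
      intro k hk
      rw [Finset.mem_range] at hk
      have e1 : m + 2 - (k + 1) = (m - k) + 1 := by omega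
      have hDk : D (k + 1) = (d ^ k / ((k + 1).factorial : ℚ)) • f1 ^ (k + 1) := by
        have := IH (k + 1) (by omega) (by omega)
        simpa using this
      have hDmk : D ((m - k) + 1) =
          (d ^ (m - k) / (((m - k) + 1).factorial : ℚ)) • f1 ^ ((m - k) + 1) := by
        have := IH ((m - k) + 1) (by omega) (by omega)
        simpa using this
      rw [e1, hDmk, hDk, derivativeFun_smul, aux_derivativeFun_pow]
      rw [smul_smul, smul_mul_assoc, mul_smul_comm, smul_smul, smul_smul]
      have e2 : f1 ^ (m - k) * f1.derivativeFun * f1 ^ (k + 1) = G := by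
        have e3 : (m - k) + (k + 1) = m + 1 := by omega
        rw [hG, ← e3, pow_add]
        ring
      rw [e2]
      congr 1
      have e4 : (((m - k) + 1).factorial : ℚ) = ((m - k : ℕ) + 1) * ((m - k).factorial : ℚ) := by
        rw [Nat.factorial_succ]; push_cast; ring
      have e5 : d ^ (m - k) * d ^ k = d ^ m := by
        rw [← pow_add]; congr 1; omega
      have hfac1 : ((m - k).factorial : ℚ) ≠ 0 := by positivity
      have hfac2 : (((k + 1).factorial : ℕ) : ℚ) ≠ 0 := by positivity
      field_simp [e4]
      linear_combination (((m-k).factorial : ℚ) *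
        (1 + ((m - k : ℕ) : ℚ))) * e5 - d ^ m * e4
    rw [Finset.sum_range_succ, Finset.sum_range_succ', Finset.sum_congr rfl hmid,
      ← Finset.sum_smul] at hsum
    have hcoef : (∑ k ∈ Finset.range (m + 1),
        (-1 : ℚ) ^ (k + 1) * d ^ m / ((m - k).factorial * (k + 1).factorial)) =
        -d ^ m / ((m + 1).factorial : ℚ) := by
      have e : (∑ k ∈ Finset.range (m + 1),
          (-1 : ℚ) ^ (k + 1) * d ^ m / ((m - k).factorial * (k + 1).factorial)) =
          d ^ m * ∑ k ∈ Finset.range (m + 1),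
            (-1 : ℚ) ^ (k + 1) / ((m - k).factorial * (k + 1).factorial) := by
        rw [Finset.mul_sum]
        exact Finset.sum_congr rfl (fun k _ => by ring)
      rw [e, aux_alt_sum]
      ring
    rw [hcoef] at hsum
    simp only [Nat.sub_self, pow_zero, one_smul, Nat.sub_zero, hD0, (show (PowerSeries.C (1 / d) : ℚ⟦X⟧).derivativeFun = 0 from derivative_C),
      zero_mul, smul_zero, add_zero] at hsum
    -- hsum : (-d^m/(m+1)!) • G + (D (m+2)).derivativeFun * C ℚ (1/d) = 0
    have hB : (1 / d) • (D (m + 2)).derivativeFun = (d ^ m / ((m + 1).factorial : ℚ)) • G := by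
      have : (D (m + 2)).derivativeFun * PowerSeries.C (1 / d) =
          (1 / d) • (D (m + 2)).derivativeFun := by
        rw [smul_eq_C_mul]; ring
      rw [this] at hsum
      have := eq_neg_of_add_eq_zero_right hsum
      rw [this, ← neg_smul]
      congr 1
      ring
    have hder : (D (m + 2)).derivativeFun =
        (d ^ (m + 1) / ((m + 1).factorial : ℚ)) • G := by
      have h := congrArg (fun x => d • x) hB
      simp only [smul_smul] at h
      rw [mul_one_div, div_self hd, one_smul] at h
      rw [h]
      congr 1
      rw [pow_succ]
      ring
    have hgoal : D (m + 2) = (d ^ (m + 1) / ((m + 2).factorial : ℚ)) • f1 ^ (m + 2) := by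
      apply derivative.ext
      · show (D (m + 2)).derivativeFun =
          ((d ^ (m + 1) / ((m + 2).factorial : ℚ)) • f1 ^ (m + 2)).derivativeFun
        rw [hder, derivativeFun_smul, aux_derivativeFun_pow, smul_smul, hG]
        congr 1
        have : ((m + 2).factorial : ℚ) = ((m : ℚ) + 2) * ((m + 1).factorial : ℚ) := by
          rw [Nat.factorial_succ]; push_cast; ring
        rw [this]
        have h1 : ((m : ℚ) + 2) ≠ 0 := by positivity
        have h2 : ((m + 1).factorial : ℚ) ≠ 0 := by positivity
        field_simp
        push_cast; ring
      · rw [hconst (m + 2) (by omega), smul_eq_C_mul, map_mul, map_pow, constantCoeff_C, hf1,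
          hconst 1 le_rfl]
        simp
    simpa using hgoal
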